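/- Every palindromic factor of p belongs to the set {0, 1, 2, 121, 101, 010, 01210, 21012, 1012101}; in particular, p contains no palindromic factor of length greater than 7. -/

import Mathlib

/-- The morphism h : 0 → 01, 1 → 21, 2 → 0. -/
def h : ℕ → List ℕ
  | 0 => [0, 1]
  | 1 => [2, 1]
  | _ => [0]

/-- Apply the morphism h to a finite word. -/
def hword (w : List ℕ) : List ℕ := (w.map h).flatten

/-- `p : ℕ → ℕ` is the infinite fixed point of h starting with 0:
it takes values in {0,1,2}, starts with 0, and for every n the word
h(p 0) h(p 1) ⋯ h(p (n-1)) is a prefix of p. -/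
def IsFixedPoint (p : ℕ → ℕ) : Prop :=
  (∀ n, p n < 3) ∧ p 0 = 0 ∧
  ∀ n k, k < (hword ((List.range n).map p)).length →
    (hword ((List.range n).map p)).getD k 0 = p k

/-- `w` is a (contiguous) factor of the infinite word `p`. -/
def IsFactor (w : List ℕ) (p : ℕ → ℕ) : Prop :=
  ∃ i : ℕ, w = (List.range w.length).map fun j => p (i + j)

/-- All length-9 factors of p. -/
def W9 : List (List ℕ) :=
  [[0, 1, 0, 2, 1, 0, 1, 2, 1],
   [0, 1, 2, 1, 0, 1, 0, 2, 1],
   [0, 1, 2, 1, 0, 2, 1, 0, 1],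
   [0, 2, 1, 0, 1, 0, 2, 1, 0],
   [0, 2, 1, 0, 1, 2, 1, 0, 1],
   [0, 2, 1, 0, 1, 2, 1, 0, 2],
   [1, 0, 1, 0, 2, 1, 0, 1, 2],
   [1, 0, 1, 2, 1, 0, 1, 0, 2],
   [1, 0, 1, 2, 1, 0, 2, 1, 0],
   [1, 0, 2, 1, 0, 1, 0, 2, 1],
   [1, 0, 2, 1, 0, 1, 2, 1, 0],
   [1, 2, 1, 0, 1, 0, 2, 1, 0],
   [1, 2, 1, 0, 2, 1, 0, 1, 0],
   [1, 2, 1, 0, 2, 1, 0, 1, 2],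
   [2, 1, 0, 1, 0, 2, 1, 0, 1],
   [2, 1, 0, 1, 2, 1, 0, 1, 0],
   [2, 1, 0, 1, 2, 1, 0, 2, 1],
   [2, 1, 0, 2, 1, 0, 1, 0, 2],
   [2, 1, 0, 2, 1, 0, 1, 2, 1]]

lemma hword_append (u v : List ℕ) : hword (u ++ v) = hword u ++ hword v := by
  simp [hword]

lemma h_len_pos (a : ℕ) : 1 ≤ (h a).length := by
  match a with
  | 0 => decide
  | 1 => decide
  | (n+2) => simp [h]

lemma h_len_le (a : ℕ) : (h a).length ≤ 2 := by
  match a with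
  | 0 => decide
  | 1 => decide
  | (n+2) => simp [h]

lemma take_drop_window (l : List ℕ) (d : ℕ) (hd : d + 9 ≤ l.length) :
    (l.drop d).take 9 = (List.range 9).map (fun t => l.getD (d + t) 0) := by
  apply List.ext_getElem
  · simp; omega
  · intro n h1 h2
    have hn : n < 9 := by simp at h2; omega
    have hln : d + n < l.length := by omega
    simp only [List.getElem_take, List.getElem_drop, List.getElem_map, List.getElem_range]
    rw [List.getD_eq_getElem _ _ hln]

lemma closure_check : ∀ u ∈ W9, ∀ d, d < 2 → ((hword u).drop d).take 9 ∈ W9 := by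
  decide

lemma pal_check : ∀ u ∈ W9, ∀ m < 10, m ≠ 0 →
    (u.take m).reverse = u.take m →
    u.take m ∈ [[0], [1], [2], [1,2,1], [1,0,1], [0,1,0],
        [0,1,2,1,0], [2,1,0,1,2], [1,0,1,2,1,0,1]] := by
  decide

section Main

variable (p : ℕ → ℕ)

/-- length of the image of the prefix of length n -/
def σ (n : ℕ) : ℕ := (hword ((List.range n).map p)).length

lemma sigma_succ (n : ℕ) : σ p (n + 1) = σ p n + (h (p n)).length := by
  unfold σ
  rw [List.range_succ, List.map_append, hword_append]
  simp [hword]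

lemma sigma_zero : σ p 0 = 0 := by simp [σ, hword]

end Main

theorem windows (p : ℕ → ℕ) (hp : IsFixedPoint p) :
    ∀ i, (List.range 9).map (fun t => p (i + t)) ∈ W9 := by
  obtain ⟨-, h0, key⟩ := hp
  -- bootstrap small values of p
  have e1 : (List.range 1).map p = [0] := by rw [show List.range 1 = [0] from rfl]; simp [h0]
  have h1 : p 1 = 1 := by
    have := key 1 1 (by rw [e1]; decide)
    rw [e1] at this; exact this.symm
  have e2 : (List.range 2).map p = [0, 1] := by
    rw [List.range_succ, List.map_append, e1]; simp [h1]
  have h2 : p 2 = 2 := by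
    have := key 2 2 (by rw [e2]; decide)
    rw [e2] at this; exact this.symm
  have h3 : p 3 = 1 := by
    have := key 2 3 (by rw [e2]; decide)
    rw [e2] at this; exact this.symm
  have e3 : (List.range 3).map p = [0, 1, 2] := by
    rw [List.range_succ, List.map_append, e2]; simp [h2]
  have e4 : (List.range 4).map p = [0, 1, 2, 1] := by
    rw [List.range_succ, List.map_append, e3]; simp [h3]
  have h4 : p 4 = 0 := by
    have := key 4 4 (by rw [e4]; decide)
    rw [e4] at this; exact this.symm
  have h5 : p 5 = 2 := by
    have := key 4 5 (by rw [e4]; decide)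
    rw [e4] at this; exact this.symm
  have h6 : p 6 = 1 := by
    have := key 4 6 (by rw [e4]; decide)
    rw [e4] at this; exact this.symm
  have e5 : (List.range 5).map p = [0, 1, 2, 1, 0] := by
    rw [List.range_succ, List.map_append, e4]; simp [h4]
  have e6 : (List.range 6).map p = [0, 1, 2, 1, 0, 2] := by
    rw [List.range_succ, List.map_append, e5]; simp [h5]
  have e7 : (List.range 7).map p = [0, 1, 2, 1, 0, 2, 1] := by
    rw [List.range_succ, List.map_append, e6]; simp [h6]
  have h7 : p 7 = 0 := by
    have := key 7 7 (by rw [e7]; decide)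
    rw [e7] at this; exact this.symm
  have h8 : p 8 = 1 := by
    have := key 7 8 (by rw [e7]; decide)
    rw [e7] at this; exact this.symm
  have h9 : p 9 = 0 := by
    have := key 7 9 (by rw [e7]; decide)
    rw [e7] at this; exact this.symm
  -- sigma facts
  have s1 : σ p 1 = 2 := by
    unfold σ; rw [e1]; rfl
  have sgrow : ∀ n m, σ p n + m ≤ σ p (n + m) := by
    intro n m
    induction m with
    | zero => simp
    | succ m ih =>
      show σ p n + (m + 1) ≤ σ p (n + m + 1)
      have := sigma_succ p (n + m)
      have := h_len_pos (p (n + m))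
      omega
  have slb : ∀ j, 1 ≤ j → j + 1 ≤ σ p j := by
    intro j hj
    have := sgrow 1 (j - 1)
    rw [show 1 + (j-1) = j by omega] at this
    omega
  have exj : ∀ i : ℕ, ∃ j, σ p j ≤ i ∧ i < σ p (j + 1) := by
    intro i
    induction i with
    | zero =>
      refine ⟨0, by simp [sigma_zero], ?_⟩
      have : σ p (0 + 1) = 2 := s1
      omega
    | succ i ih =>
      obtain ⟨j, hj1, hj2⟩ := ih
      by_cases hc : i + 1 < σ p (j + 1)
      · exact ⟨j, by omega, hc⟩
      · refine ⟨j + 1, by omega, ?_⟩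
        have := sgrow (j + 1) 1
        omega
  -- main induction
  intro i
  induction i using Nat.strong_induction_on with
  | _ i IH =>
    obtain ⟨j, hj1, hj2⟩ := exj i
    rcases Nat.eq_zero_or_pos j with hj0 | hjpos
    · -- base case: i < 2
      subst hj0
      rw [s1] at hj2
      interval_cases i
      · have : (List.range 9).map (fun t => p (0 + t)) =
            [0, 1, 2, 1, 0, 2, 1, 0, 1] := by
          simp [show List.range 9 = [0,1,2,3,4,5,6,7,8] from rfl,
            h0, h1, h2, h3, h4, h5, h6, h7, h8]
        rw [this]; decide
      · have : (List.range 9).map (fun t => p (1 + t)) =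
            [1, 2, 1, 0, 2, 1, 0, 1, 0] := by
          simp [show List.range 9 = [0,1,2,3,4,5,6,7,8] from rfl,
            h1, h2, h3, h4, h5, h6, h7, h8, h9]
        rw [this]; decide
    · have hji : j < i := by
        have := slb j hjpos
        omega
      have hWj := IH j hji
      set Wj := (List.range 9).map (fun t => p (j + t)) with hWjdef
      set d := i - σ p j with hd
      have hdlt : d < 2 := by
        have := sigma_succ p j
        have := h_len_le (p j)
        omega
      -- split the prefix of length j+9
      have hsplit : (List.range (j + 9)).map p = (List.range j).map p ++ Wj := by
        rw [List.range_add, List.map_append, List.map_map]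
        rfl
      have hs9 : σ p (j + 9) = σ p j + (hword Wj).length := by
        unfold σ
        rw [hsplit, hword_append, List.length_append]
      have hbig : i + 9 ≤ σ p (j + 9) := by
        have := sgrow (j + 1) 8
        rw [show j + 1 + 8 = j + 9 by omega] at this
        omega
      have hlenWj : d + 9 ≤ (hword Wj).length := by omega
      have hpt : ∀ t, t < 9 → p (i + t) = (hword Wj).getD (d + t) 0 := by
        intro t ht
        have hk : i + t < σ p (j + 9) := by omega
        have := key (j + 9) (i + t) hk
        rw [hsplit, hword_append] at this
        rw [List.getD_append_right _ _ _ _ (by unfold σ at hj1; omega)] at this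
        have harith : i + t - ((List.range j).map p |> hword).length = d + t := by
          unfold σ at hj1 hd; omega
        rw [harith] at this
        exact this.symm
      have hwin : (List.range 9).map (fun t => p (i + t)) =
          ((hword Wj).drop d).take 9 := by
        rw [take_drop_window _ _ hlenWj]
        apply List.map_congr_left
        intro t ht
        exact hpt t (List.mem_range.mp ht)
      rw [hwin]
      exact closure_check Wj hWj d hdlt

lemma tail_dropLast_comm (l : List ℕ) : l.dropLast.tail = l.tail.dropLast := by
  apply List.ext_getElem
  · simp
  · intro k h1 h2
    simp [List.getElem_tail, List.getElem_dropLast]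

lemma pal_shrink (w : List ℕ) (hpal : w.reverse = w) :
    ((w.drop 1).dropLast).reverse = (w.drop 1).dropLast := by
  rw [List.drop_one]
  rw [← List.tail_reverse]
  have hrev : w.tail.reverse = w.dropLast := by
    conv_lhs => rw [← hpal]
    rw [List.tail_reverse, List.reverse_reverse]
  rw [hrev]
  exact tail_dropLast_comm w

lemma factor_shrink (p : ℕ → ℕ) (w : List ℕ) (hw : IsFactor w p) :
    IsFactor ((w.drop 1).dropLast) p := by
  obtain ⟨i, hi⟩ := hw
  refine ⟨i + 1, ?_⟩
  apply List.ext_getElem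
  · simp
  · intro n h1 h2
    simp only [List.getElem_dropLast, List.getElem_drop]
    have h3 : 1 + n < w.length := by
      simp only [List.length_dropLast, List.length_drop] at h1
      omega
    rw [List.getElem_of_eq hi h3]
    simp only [List.getElem_map, List.getElem_range]
    congr 1
    omega

theorem stmt15 (p : ℕ → ℕ) (hp : IsFixedPoint p) :
    ∀ w : List ℕ, w ≠ [] → IsFactor w p → w.reverse = w →
      w ∈ [[0], [1], [2], [1,2,1], [1,0,1], [0,1,0],
        [0,1,2,1,0], [2,1,0,1,2], [1,0,1,2,1,0,1]] := by
  have main := windows p hp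
  suffices H : ∀ n, ∀ w : List ℕ, w.length = n → w ≠ [] → IsFactor w p →
      w.reverse = w →
      w ∈ [[0], [1], [2], [1,2,1], [1,0,1], [0,1,0],
        [0,1,2,1,0], [2,1,0,1,2], [1,0,1,2,1,0,1]] by
    intro w hne hf hpal
    exact H w.length w rfl hne hf hpal
  intro n
  induction n using Nat.strong_induction_on with
  | _ n IH =>
    intro w hlen hne hf hpal
    by_cases hn9 : n ≤ 9
    · -- w is a prefix of a window of length 9
      obtain ⟨i, hi⟩ := hf
      have hwin := main i
      have hw_take : w = ((List.range 9).map (fun t => p (i + t))).take n := by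
        rw [← List.map_take, List.take_range, min_eq_left hn9, ← hlen]
        exact hi
      rw [hw_take] at hpal ⊢
      have hn0 : n ≠ 0 := by
        intro hc; subst hc; exact hne (List.length_eq_zero_iff.mp hlen)
      exact pal_check _ hwin n (by omega) hn0 hpal
    · -- shrink
      push_neg at hn9
      set w' := (w.drop 1).dropLast with hw'
      have hlen' : w'.length = n - 2 := by
        simp only [hw', List.length_dropLast, List.length_drop, hlen]
        omega
      have hne' : w' ≠ [] := by
        intro hcon
        rw [hcon] at hlen'
        simp at hlen'
        omega
      have hf' : IsFactor w' p := factor_shrink p w hf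
      have hpal' : w'.reverse = w' := pal_shrink w hpal
      have := IH (n - 2) (by omega) w' hlen' hne' hf' hpal'
      -- but |w'| = n - 2 ≥ 8 contradicts membership
      exfalso
      simp only [List.mem_cons, List.not_mem_nil, or_false] at this
      rcases this with h|h|h|h|h|h|h|h|h <;>
        (rw [h] at hlen'; simp at hlen'; omega)
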